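/- Let h : ℝⁿ → ℝ^{m₁}, g : ℝⁿ → ℝ^{m₂} be polynomial maps, f ∈ ℝ[x], and suppose (i) m₁ ≤ n and (ii) for any feasible u (i.e., h(u)=0, g(u)≥0) at most n − m₁ of g₁(u),…,g_{m₂}(u) vanish. Define W as the complex variety cut out by h₁,…,h_{m₁} and the polynomials φ (products of defining equations of the determinantal varieties G_J = {x : rank[∇f, ∇h, ∇g_J] ≤ m₁+|J|} with ∏_{j∉J} gⱼ, over all J ⊆ [m₂] with |J| ≤ min(m₁+m₂, n−1) − m₁). Let Θ be the union over J ⊆ [m₂], |J| ≤ n−m₁, of the singular loci {x ∈ V(h,g_J) : rank[∇h ∇g_J] < m₁+|J|}, and let K_x be the projection to x-space of the KKT variety. Then W = Θ ∪ K_x. -/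

import Mathlib

open MvPolynomial Submodule Module

noncomputable def dvec {n : ℕ} (x : Fin n → ℂ) (p : MvPolynomial (Fin n) ℝ) : Fin n → ℂ :=
  fun k => aeval x (pderiv k p)

noncomputable def cols {n m₁ m₂ : ℕ} (x : Fin n → ℂ)
    (h : Fin m₁ → MvPolynomial (Fin n) ℝ) (g : Fin m₂ → MvPolynomial (Fin n) ℝ)
    (J : Finset (Fin m₂)) : (Fin m₁ ⊕ {j // j ∈ J}) → Fin n → ℂ :=
  Sum.elim (fun i => dvec x (h i)) (fun j => dvec x (g j.1))

lemma rank_of_cols {n : ℕ} {ι : Type*} [Fintype ι] (v : ι → Fin n → ℂ) :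
    (Matrix.of fun (k : Fin n) (c : ι) => v c k).rank
      = finrank ℂ (span ℂ (Set.range v)) := by
  rw [Matrix.rank_eq_finrank_span_cols]
  rfl

lemma rank_theta {n m₁ m₂ : ℕ} (x : Fin n → ℂ)
    (h : Fin m₁ → MvPolynomial (Fin n) ℝ) (g : Fin m₂ → MvPolynomial (Fin n) ℝ)
    (J : Finset (Fin m₂)) :
    Matrix.rank (Matrix.of fun (k : Fin n) (c : Fin m₁ ⊕ {j // j ∈ J}) =>
        Sum.elim (fun i => aeval x (pderiv k (h i)))
          (fun j => aeval x (pderiv k (g j.1))) c)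
      = finrank ℂ (span ℂ (Set.range (cols x h g J))) := by
  rw [show (Matrix.of fun (k : Fin n) (c : Fin m₁ ⊕ {j // j ∈ J}) =>
        Sum.elim (fun i => aeval x (pderiv k (h i)))
          (fun j => aeval x (pderiv k (g j.1))) c)
      = (Matrix.of fun (k : Fin n) (c : Fin m₁ ⊕ {j // j ∈ J}) => cols x h g J c k) from by
    ext k c; cases c <;> rfl]
  exact rank_of_cols _

lemma rank_W {n m₁ m₂ : ℕ} (x : Fin n → ℂ) (f : MvPolynomial (Fin n) ℝ)
    (h : Fin m₁ → MvPolynomial (Fin n) ℝ) (g : Fin m₂ → MvPolynomial (Fin n) ℝ)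
    (J : Finset (Fin m₂)) :
    Matrix.rank (Matrix.of fun (k : Fin n) (c : Unit ⊕ Fin m₁ ⊕ {j // j ∈ J}) =>
        Sum.elim (fun _ => aeval x (pderiv k f))
          (Sum.elim (fun i => aeval x (pderiv k (h i)))
            (fun j => aeval x (pderiv k (g j.1)))) c)
      = finrank ℂ (span ℂ (Set.range (Sum.elim (fun _ : Unit => dvec x f) (cols x h g J)))) := by
  rw [show (Matrix.of fun (k : Fin n) (c : Unit ⊕ Fin m₁ ⊕ {j // j ∈ J}) =>
        Sum.elim (fun _ => aeval x (pderiv k f))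
          (Sum.elim (fun i => aeval x (pderiv k (h i)))
            (fun j => aeval x (pderiv k (g j.1)))) c)
      = (Matrix.of fun (k : Fin n) (c : Unit ⊕ Fin m₁ ⊕ {j // j ∈ J}) =>
          Sum.elim (fun _ : Unit => dvec x f) (cols x h g J) c k) from by
    ext k c
    rcases c with _ | c
    · rfl
    · cases c <;> rfl]
  exact rank_of_cols _

lemma span_W_eq {n m₁ m₂ : ℕ} (x : Fin n → ℂ) (f : MvPolynomial (Fin n) ℝ)
    (h : Fin m₁ → MvPolynomial (Fin n) ℝ) (g : Fin m₂ → MvPolynomial (Fin n) ℝ)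
    (J : Finset (Fin m₂)) :
    span ℂ (Set.range (Sum.elim (fun _ : Unit => dvec x f) (cols x h g J)))
      = span ℂ {dvec x f} ⊔ span ℂ (Set.range (cols x h g J)) := by
  rw [Set.Sum.elim_range, span_union, Set.range_const]

lemma finrank_cols_le {n m₁ m₂ : ℕ} (x : Fin n → ℂ)
    (h : Fin m₁ → MvPolynomial (Fin n) ℝ) (g : Fin m₂ → MvPolynomial (Fin n) ℝ)
    (J : Finset (Fin m₂)) :
    finrank ℂ (span ℂ (Set.range (cols x h g J))) ≤ m₁ + J.card := by
  have := finrank_range_le_card (R := ℂ) (cols x h g J)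
  simpa [Set.finrank, Fintype.card_sum, Fintype.card_coe] using this

lemma kkt_of_mem_span {n m₁ m₂ : ℕ} (x : Fin n → ℂ)
    (f : MvPolynomial (Fin n) ℝ) (h : Fin m₁ → MvPolynomial (Fin n) ℝ)
    (g : Fin m₂ → MvPolynomial (Fin n) ℝ) (J : Finset (Fin m₂))
    (hgJ : ∀ j ∈ J, aeval x (g j) = 0) (hh : ∀ i, aeval x (h i) = 0)
    (hmem : dvec x f ∈ span ℂ (Set.range (cols x h g J))) :
    ∃ (lam : Fin m₁ → ℂ) (mu : Fin m₂ → ℂ),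
      (∀ k : Fin n, aeval x (pderiv k f) =
        (∑ i, lam i * aeval x (pderiv k (h i))) +
          ∑ j, mu j * aeval x (pderiv k (g j))) ∧
      (∀ i, aeval x (h i) = 0) ∧ ∀ j, mu j * aeval x (g j) = 0 := by
  classical
  obtain ⟨c, hc⟩ := (mem_span_range_iff_exists_fun ℂ).mp hmem
  refine ⟨fun i => c (Sum.inl i), fun j => if hj : j ∈ J then c (Sum.inr ⟨j, hj⟩) else 0, ?_, hh, ?_⟩
  · intro k
    have h1 := congrFun hc k
    simp only [Finset.sum_apply, Pi.smul_apply, smul_eq_mul, Fintype.sum_sum_type] at h1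
    refine h1.symm.trans ?_
    congr 1
    have h2 : ∑ j : {j // j ∈ J}, c (Sum.inr j) * aeval x (pderiv k (g j.1))
        = ∑ j ∈ J, (if hj : j ∈ J then c (Sum.inr ⟨j, hj⟩) else 0) * aeval x (pderiv k (g j)) := by
      rw [← Finset.sum_coe_sort J
        (fun j => (if hj : j ∈ J then c (Sum.inr ⟨j, hj⟩) else 0) * aeval x (pderiv k (g j)))]
      apply Finset.sum_congr rfl
      intro j _
      rw [dif_pos j.2]
    refine h2.trans ?_
    apply Finset.sum_subset (Finset.subset_univ J)
    intro j _ hj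
    rw [dif_neg hj, zero_mul]
  · intro j
    by_cases hj : j ∈ J
    · simp only [hgJ j hj, mul_zero]
    · simp only [dif_neg hj, zero_mul]


/-- revised Lemma 3.1: under (i) `m₁ ≤ n` and (ii) at most
`n − m₁` of the `gⱼ` vanish at any feasible point, the variety `W` cut out by
the `hᵢ` and the polynomials `φ` equals `Θ ∪ K_x`, where `Θ` is the union of
singular loci and `K_x` the projection of the KKT variety. -/
theorem W_eq_Theta_union_KKT
    (n m₁ m₂ : ℕ)
    (f : MvPolynomial (Fin n) ℝ)
    (h : Fin m₁ → MvPolynomial (Fin n) ℝ) (g : Fin m₂ → MvPolynomial (Fin n) ℝ)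
    (hm : m₁ ≤ n)
    (hfeas : ∀ u : Fin n → ℝ,
      ((∀ i, eval u (h i) = 0) ∧ ∀ j, 0 ≤ eval u (g j)) →
        Nat.card {j : Fin m₂ // eval u (g j) = 0} ≤ n - m₁)
    (len : Finset (Fin m₂) → ℕ)
    (η : (J : Finset (Fin m₂)) → Fin (len J) → MvPolynomial (Fin n) ℝ)
    -- the `η J i` are defining polynomials for the determinantal variety `G_J`
    (hη : ∀ J : Finset (Fin m₂), J.card ≤ min (m₁ + m₂) (n - 1) - m₁ →
      {x : Fin n → ℂ | ∀ i, aeval x (η J i) = 0} =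
        {x : Fin n → ℂ |
          Matrix.rank (Matrix.of fun (k : Fin n) (c : Unit ⊕ Fin m₁ ⊕ {j // j ∈ J}) =>
            Sum.elim (fun _ => aeval x (pderiv k f))
              (Sum.elim (fun i => aeval x (pderiv k (h i)))
                (fun j => aeval x (pderiv k (g j.1)))) c) ≤ m₁ + J.card}) :
    -- W
    {x : Fin n → ℂ | (∀ i, aeval x (h i) = 0) ∧
        ∀ J : Finset (Fin m₂), J.card ≤ min (m₁ + m₂) (n - 1) - m₁ →
          ∀ i, aeval x (η J i) * ∏ j ∈ Jᶜ, aeval x (g j) = 0} =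
      -- Θ
      {x : Fin n → ℂ | ∃ J : Finset (Fin m₂), J.card ≤ n - m₁ ∧
          (∀ i, aeval x (h i) = 0) ∧ (∀ j ∈ J, aeval x (g j) = 0) ∧
          Matrix.rank (Matrix.of fun (k : Fin n) (c : Fin m₁ ⊕ {j // j ∈ J}) =>
            Sum.elim (fun i => aeval x (pderiv k (h i)))
              (fun j => aeval x (pderiv k (g j.1))) c) < m₁ + J.card} ∪
      -- K_x
      {x : Fin n → ℂ | ∃ (lam : Fin m₁ → ℂ) (mu : Fin m₂ → ℂ),
          (∀ k : Fin n, aeval x (pderiv k f) =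
            (∑ i, lam i * aeval x (pderiv k (h i))) +
              ∑ j, mu j * aeval x (pderiv k (g j))) ∧
          (∀ i, aeval x (h i) = 0) ∧ ∀ j, mu j * aeval x (g j) = 0} := by
  classical
  ext x
  simp only [Set.mem_setOf_eq, Set.mem_union]
  constructor
  · rintro ⟨hh, hW⟩
    set S : Finset (Fin m₂) := Finset.univ.filter (fun j => aeval x (g j) = 0) with hS
    have hgS : ∀ j ∈ S, aeval x (g j) = 0 := fun j hj => (Finset.mem_filter.mp hj).2
    by_cases hcase : S.card ≤ min (m₁ + m₂) (n - 1) - m₁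
    · -- few active constraints
      have hprod : (∏ j ∈ Sᶜ, aeval x (g j)) ≠ 0 := by
        rw [Finset.prod_ne_zero_iff]
        intro j hj
        have hj' : j ∉ S := Finset.mem_compl.mp hj
        simpa [hS] using hj'
      have hη0 : x ∈ {x : Fin n → ℂ | ∀ i, aeval x (η S i) = 0} :=
        fun i => (mul_eq_zero.mp (hW S hcase i)).resolve_right hprod
      rw [hη S hcase] at hη0
      rw [Set.mem_setOf_eq, rank_W x f h g S, span_W_eq] at hη0
      by_cases hr : finrank ℂ (span ℂ (Set.range (cols x h g S))) < m₁ + S.card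
      · left
        refine ⟨S, by omega, hh, hgS, ?_⟩
        rw [rank_theta]
        exact hr
      · right
        push_neg at hr
        have heq : span ℂ (Set.range (cols x h g S))
            = span ℂ {dvec x f} ⊔ span ℂ (Set.range (cols x h g S)) :=
          Submodule.eq_of_le_of_finrank_le le_sup_right (hη0.trans hr)
        have hmem : dvec x f ∈ span ℂ (Set.range (cols x h g S)) := by
          rw [heq]
          exact Submodule.mem_sup_left (mem_span_singleton_self _)
        exact kkt_of_mem_span x f h g S hgS hh hmem
    · -- many active constraints
      have hSm : S.card ≤ m₂ := le_trans (Finset.card_le_univ S) (by simp)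
      have hcard : n - m₁ ≤ S.card := by omega
      obtain ⟨J, hJS, hJcard⟩ := Finset.exists_subset_card_eq hcard
      have hgJ : ∀ j ∈ J, aeval x (g j) = 0 := fun j hj => hgS j (hJS hj)
      by_cases hr : finrank ℂ (span ℂ (Set.range (cols x h g J))) < m₁ + J.card
      · left
        refine ⟨J, hJcard.le, hh, hgJ, ?_⟩
        rw [rank_theta]
        exact hr
      · right
        push_neg at hr
        have h2 := finrank_cols_le x h g J
        have htop : span ℂ (Set.range (cols x h g J)) = ⊤ := by
          apply Submodule.eq_top_of_finrank_eq
          have h1 : finrank ℂ (Fin n → ℂ) = n := Module.finrank_fin_fun ℂ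
          omega
        have hmem : dvec x f ∈ span ℂ (Set.range (cols x h g J)) := htop ▸ Submodule.mem_top
        exact kkt_of_mem_span x f h g J hgJ hh hmem
  · rintro (⟨J, hJcard, hh, hgJ, hrank⟩ | ⟨lam, mu, hgrad, hh, hcomp⟩)
    · refine ⟨hh, fun J' hJ'c i => ?_⟩
      by_cases hsub : J ⊆ J'
      · rw [rank_theta] at hrank
        have hsub' : J.card ≤ J'.card := Finset.card_le_card hsub
        -- bound the rank of the W matrix
        have hP : span ℂ (Set.range (Sum.elim (fun _ : Unit => dvec x f) (cols x h g J')))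
            ≤ (span ℂ {dvec x f} ⊔ span ℂ (Set.range (cols x h g J)))
              ⊔ span ℂ (Set.range (fun j : {j // j ∈ J' \ J} => dvec x (g j.1))) := by
          rw [span_le]
          rintro v ⟨c, rfl⟩
          rcases c with c | c
          · exact Submodule.mem_sup_left (Submodule.mem_sup_left (mem_span_singleton_self _))
          · rcases c with i | ⟨j, hj⟩
            · exact Submodule.mem_sup_left
                (Submodule.mem_sup_right (subset_span ⟨Sum.inl i, rfl⟩))
            · by_cases hjJ : j ∈ J
              · exact Submodule.mem_sup_left
                  (Submodule.mem_sup_right (subset_span ⟨Sum.inr ⟨j, hjJ⟩, rfl⟩))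
              · exact Submodule.mem_sup_right
                  (subset_span ⟨⟨j, Finset.mem_sdiff.mpr ⟨hj, hjJ⟩⟩, rfl⟩)
        have hA : finrank ℂ (span ℂ ({dvec x f} : Set (Fin n → ℂ))) ≤ 1 := by
          have h0 := finrank_range_le_card (R := ℂ) (fun _ : Unit => dvec x f)
          simp only [Set.finrank] at h0
          rwa [Set.range_const] at h0
        have hC : finrank ℂ (span ℂ
            (Set.range (fun j : {j // j ∈ J' \ J} => dvec x (g j.1)))) ≤ (J' \ J).card := by
          have h0 := finrank_range_le_card (R := ℂ) (fun j : {j // j ∈ J' \ J} => dvec x (g j.1))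
          rw [Fintype.card_coe] at h0
          simpa only [Set.finrank] using h0
        have hcardsd : (J' \ J).card = J'.card - J.card := Finset.card_sdiff_of_subset hsub
        have hmono := Submodule.finrank_mono hP
        have hsup1 := Submodule.finrank_add_le_finrank_add_finrank
          (span ℂ {dvec x f} ⊔ span ℂ (Set.range (cols x h g J)))
          (span ℂ (Set.range (fun j : {j // j ∈ J' \ J} => dvec x (g j.1))))
        have hsup2 := Submodule.finrank_add_le_finrank_add_finrank
          (span ℂ {dvec x f}) (span ℂ (Set.range (cols x h g J)))
        have hb : x ∈ {x : Fin n → ℂ |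
            Matrix.rank (Matrix.of fun (k : Fin n) (c : Unit ⊕ Fin m₁ ⊕ {j // j ∈ J'}) =>
              Sum.elim (fun _ => aeval x (pderiv k f))
                (Sum.elim (fun i => aeval x (pderiv k (h i)))
                  (fun j => aeval x (pderiv k (g j.1)))) c) ≤ m₁ + J'.card} := by
          rw [Set.mem_setOf_eq, rank_W x f h g J']
          omega
        rw [← hη J' hJ'c] at hb
        exact mul_eq_zero.mpr (Or.inl (hb i))
      · obtain ⟨j, hjJ, hjJ'⟩ := Finset.not_subset.mp hsub
        exact mul_eq_zero.mpr
          (Or.inr (Finset.prod_eq_zero (Finset.mem_compl.mpr hjJ') (hgJ j hjJ)))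
    · refine ⟨hh, fun J' hJ'c i => ?_⟩
      by_cases hz : ∃ j ∈ J'ᶜ, aeval x (g j) = 0
      · obtain ⟨j, hj, hjz⟩ := hz
        exact mul_eq_zero.mpr (Or.inr (Finset.prod_eq_zero hj hjz))
      · push_neg at hz
        have hmu : ∀ j ∉ J', mu j = 0 := by
          intro j hj
          have hgz := hz j (Finset.mem_compl.mpr hj)
          rcases mul_eq_zero.mp (hcomp j) with h' | h'
          · exact h'
          · exact absurd h' hgz
        have hmem : dvec x f ∈ span ℂ (Set.range (cols x h g J')) := by
          have hdf : dvec x f = (∑ i, lam i • cols x h g J' (Sum.inl i)) +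
              ∑ j : {j // j ∈ J'}, mu j.1 • cols x h g J' (Sum.inr j) := by
            funext k
            simp only [Pi.add_apply, Finset.sum_apply, Pi.smul_apply, smul_eq_mul]
            have hsum : ∑ j : {j // j ∈ J'}, mu j.1 * aeval x (pderiv k (g j.1))
                = ∑ j : Fin m₂, mu j * aeval x (pderiv k (g j)) := by
              rw [Finset.sum_coe_sort J' (fun j => mu j * aeval x (pderiv k (g j)))]
              apply Finset.sum_subset (Finset.subset_univ J')
              intro j _ hj
              rw [hmu j hj, zero_mul]
            show aeval x (pderiv k f) = _
            rw [hgrad k]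
            congr 1
            exact hsum.symm
          rw [hdf]
          exact add_mem (sum_mem fun i _ => smul_mem _ _ (subset_span ⟨Sum.inl i, rfl⟩))
            (sum_mem fun j _ => smul_mem _ _ (subset_span ⟨Sum.inr j, rfl⟩))
        have hspan : span ℂ (Set.range (Sum.elim (fun _ : Unit => dvec x f) (cols x h g J')))
            = span ℂ (Set.range (cols x h g J')) := by
          rw [span_W_eq]
          exact sup_eq_right.mpr ((span_singleton_le_iff_mem _ _).mpr hmem)
        have hb : x ∈ {x : Fin n → ℂ |
            Matrix.rank (Matrix.of fun (k : Fin n) (c : Unit ⊕ Fin m₁ ⊕ {j // j ∈ J'}) =>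
              Sum.elim (fun _ => aeval x (pderiv k f))
                (Sum.elim (fun i => aeval x (pderiv k (h i)))
                  (fun j => aeval x (pderiv k (g j.1)))) c) ≤ m₁ + J'.card} := by
          rw [Set.mem_setOf_eq, rank_W x f h g J', hspan]
          exact finrank_cols_le x h g J'
        rw [← hη J' hJ'c] at hb
        exact mul_eq_zero.mpr (Or.inl (hb i))
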